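/- Let H ∈ ℝ^{m×p} and V ∈ ℝ^{n×p}. Then the optimal worst-case error achievable by affine moment closure functions satisfies the duality formula inf_{K ∈ ℝ^{m×n}, K₀ ∈ ℝ^m} max_{i,j} |(H − (KV + K₀𝟏ᵀ))_{ij}| = sup { (Hf)_i : i ∈ {1,…,m}, f ∈ ℝ^p, Vf = 0, 𝟏ᵀf = 0, ‖f‖_{ℓ1} ≤ 1 }. -/

import Mathlib

open Matrix BigOperators

/-- Auxiliary linear map sending `(k, c)` to the vector `j ↦ ∑ l, k l * V l j + c`. -/
noncomputable def OptAffineTmap {n p : ℕ} (V : Matrix (Fin n) (Fin p) ℝ) :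
    ((Fin n → ℝ) × ℝ) →ₗ[ℝ] (Fin p → ℝ) where
  toFun kc := fun j => (∑ l, kc.1 l * V l j) + kc.2
  map_add' x y := by
    funext j
    simp [add_mul, Finset.sum_add_distrib]
    ring
  map_smul' r x := by
    funext j
    simp [Finset.mul_sum, mul_assoc, mul_add]

lemma OptAffineTmap_apply {n p : ℕ} (V : Matrix (Fin n) (Fin p) ℝ) (kc : (Fin n → ℝ) × ℝ)
    (j : Fin p) : OptAffineTmap V kc j = (∑ l, kc.1 l * V l j) + kc.2 := rfl

lemma optaffine_sup_abs_eq_norm {p : ℕ} [Nonempty (Fin p)] (x : Fin p → ℝ) :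
    (⨆ j, |x j|) = ‖x‖ := by
  have hb : BddAbove (Set.range fun j => |x j|) := Finite.bddAbove_range _
  have h0 : 0 ≤ ⨆ j, |x j| :=
    le_trans (abs_nonneg _) (le_ciSup hb (Classical.arbitrary (Fin p)))
  refine le_antisymm (ciSup_le fun j => ?_) ((pi_norm_le_iff_of_nonneg h0).mpr fun j => ?_)
  · rw [← Real.norm_eq_abs]; exact norm_le_pi_norm x j
  · rw [Real.norm_eq_abs]; exact le_ciSup hb j

/-- A vector `f` with `Vf = 0` and `∑ f = 0` annihilates everything in the range of `Tmap`. -/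
lemma optaffine_orth {n p : ℕ} (V : Matrix (Fin n) (Fin p) ℝ) (f : Fin p → ℝ)
    (h1 : V.mulVec f = 0) (h2 : ∑ j, f j = 0) (k : Fin n → ℝ) (c : ℝ) :
    ∑ j, OptAffineTmap V (k, c) j * f j = 0 := by
  have hV : ∀ l, ∑ j, V l j * f j = 0 := by
    intro l
    have := congrFun h1 l
    simpa [Matrix.mulVec, dotProduct] using this
  calc ∑ j, ((∑ l, k l * V l j) + c) * f j
      = ∑ l, k l * (∑ j, V l j * f j) + c * ∑ j, f j := by
        simp [add_mul, Finset.sum_add_distrib, Finset.sum_mul, Finset.mul_sum, mul_assoc]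
        rw [Finset.sum_comm]
    _ = 0 := by simp [hV, h2]

lemma optaffine_psi_eq {p : ℕ} (ψ : (Fin p → ℝ) →ₗ[ℝ] ℝ) (x : Fin p → ℝ) :
    ψ x = ∑ j, x j * ψ (Pi.single j 1) := by
  conv_lhs => rw [← Finset.univ_sum_single x]
  rw [map_sum]
  refine Finset.sum_congr rfl fun j _ => ?_
  have : Pi.single j (x j) = x j • (Pi.single j 1 : Fin p → ℝ) := by
    funext r
    by_cases hr : r = j <;> simp [Pi.single_apply, hr]
  rw [this, _root_.map_smul, smul_eq_mul]

lemma optaffine_dual_vector {p : ℕ} (W : Submodule ℝ (Fin p → ℝ)) (h : Fin p → ℝ)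
    (hne : (Submodule.Quotient.mk h : (Fin p → ℝ) ⧸ W) ≠ 0) :
    ∃ ψ : (Fin p → ℝ) →ₗ[ℝ] ℝ, (∀ w ∈ W, ψ w = 0) ∧ (∀ x, |ψ x| ≤ ‖x‖) ∧
      ψ h = ‖(Submodule.Quotient.mk h : (Fin p → ℝ) ⧸ W)‖ := by
  haveI : IsClosed (W : Set (Fin p → ℝ)) := Submodule.closed_of_finiteDimensional W
  obtain ⟨g, hg1, hg2⟩ := exists_dual_vector ℝ _ (norm_ne_zero_iff.mpr hne)
  refine ⟨g.toLinearMap.comp W.mkQ, ?_, ?_, ?_⟩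
  · intro w hw
    simp [Submodule.mkQ_apply, (Submodule.Quotient.mk_eq_zero W).mpr hw]
  · intro x
    calc |g (Submodule.Quotient.mk x)| ≤ ‖g‖ * ‖(Submodule.Quotient.mk x : (Fin p → ℝ) ⧸ W)‖ :=
          g.le_opNorm _
      _ ≤ ‖x‖ := by rw [hg1, one_mul]; exact Submodule.Quotient.norm_mk_le W x
  · simpa using hg2

theorem optimal_affine_mcf_duality
    {m n p : ℕ} (hm : 0 < m) (hp : 0 < p)
    (H : Matrix (Fin m) (Fin p) ℝ) (V : Matrix (Fin n) (Fin p) ℝ) :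
    (⨅ K : Matrix (Fin m) (Fin n) ℝ, ⨅ K0 : Fin m → ℝ,
        ⨆ i, ⨆ j, |(H - (K * V + Matrix.of fun i (_ : Fin p) => K0 i)) i j|) =
      sSup {a : ℝ | ∃ i : Fin m, ∃ f : Fin p → ℝ,
        V.mulVec f = 0 ∧ ∑ j, f j = 0 ∧ ∑ j, |f j| ≤ 1 ∧ a = H.mulVec f i} := by
  haveI : Nonempty (Fin p) := ⟨⟨0, hp⟩⟩
  haveI : Nonempty (Fin m) := ⟨⟨0, hm⟩⟩
  set T := OptAffineTmap V with hT
  set W : Submodule ℝ (Fin p → ℝ) := LinearMap.range T with hWdef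
  haveI : IsClosed (W : Set (Fin p → ℝ)) := Submodule.closed_of_finiteDimensional W
  set d : Fin m → ℝ :=
    fun i => ‖(Submodule.Quotient.mk (fun j => H i j) : (Fin p → ℝ) ⧸ W)‖ with hd
  set D := ⨆ i, d i with hD
  have hdD : ∀ i, d i ≤ D := fun i => le_ciSup (Finite.bddAbove_range d) i
  -- entrywise description of the residual matrix
  have entry : ∀ (K : Matrix (Fin m) (Fin n) ℝ) (K0 : Fin m → ℝ) (i : Fin m) (j : Fin p),
      (H - (K * V + Matrix.of fun i (_ : Fin p) => K0 i)) i j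
        = H i j - T (K i, K0 i) j := by
    intro K K0 i j
    simp [Matrix.sub_apply, Matrix.add_apply, Matrix.mul_apply, hT, OptAffineTmap_apply]
  -- quotient norm is a lower bound for distances to W
  have q_le : ∀ (x w : Fin p → ℝ), w ∈ W →
      ‖(Submodule.Quotient.mk x : (Fin p → ℝ) ⧸ W)‖ ≤ ‖x - w‖ := by
    intro x w hw
    have hmk : (Submodule.Quotient.mk (x - w) : (Fin p → ℝ) ⧸ W) = Submodule.Quotient.mk x := by
      rw [Submodule.Quotient.eq]
      simpa using W.neg_mem hw
    rw [← hmk]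
    exact Submodule.Quotient.norm_mk_le W (x - w)
  -- orthogonality of feasible f against W
  have orth : ∀ f : Fin p → ℝ, V.mulVec f = 0 → ∑ j, f j = 0 →
      ∀ w ∈ W, ∑ j, w j * f j = 0 := by
    intro f h1 h2 w hw
    obtain ⟨⟨k, c⟩, rfl⟩ := hw
    exact optaffine_orth V f h1 h2 k c
  -- every element of the feasible set is at most D
  have hub : ∀ a ∈ {a : ℝ | ∃ i : Fin m, ∃ f : Fin p → ℝ,
      V.mulVec f = 0 ∧ ∑ j, f j = 0 ∧ ∑ j, |f j| ≤ 1 ∧ a = H.mulVec f i}, a ≤ D := by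
    rintro a ⟨i, f, hf1, hf2, hf3, rfl⟩
    refine le_trans ?_ (hdD i)
    refine le_of_forall_pos_le_add ?_
    intro ε hε
    obtain ⟨mm, hmm, hnorm⟩ := Submodule.Quotient.norm_mk_lt
      (Submodule.Quotient.mk (fun j => H i j) : (Fin p → ℝ) ⧸ W) hε
    have hw : (fun j => H i j) - mm ∈ W := (Submodule.Quotient.eq W).mp hmm.symm
    have hsplit : H.mulVec f i = ∑ j, mm j * f j := by
      have h0 := orth f hf1 hf2 _ hw
      have : ∑ j, ((fun j => H i j) - mm) j * f j
          = ∑ j, H i j * f j - ∑ j, mm j * f j := by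
        simp [sub_mul, Finset.sum_sub_distrib]
      rw [this] at h0
      have hmv : H.mulVec f i = ∑ j, H i j * f j := by
        simp [Matrix.mulVec, dotProduct]
      linarith
    rw [hsplit]
    calc ∑ j, mm j * f j ≤ ∑ j, |mm j * f j| :=
          Finset.sum_le_sum fun j _ => le_abs_self _
      _ = ∑ j, |mm j| * |f j| := by simp [abs_mul]
      _ ≤ ∑ j, ‖mm‖ * |f j| := by
          refine Finset.sum_le_sum fun j _ => ?_
          exact mul_le_mul_of_nonneg_right
            (by rw [← Real.norm_eq_abs]; exact norm_le_pi_norm mm j) (abs_nonneg _)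
      _ = ‖mm‖ * ∑ j, |f j| := by rw [← Finset.mul_sum]
      _ ≤ ‖mm‖ := mul_le_of_le_one_right (norm_nonneg _) hf3
      _ ≤ d i + ε := le_of_lt hnorm
  -- 0 belongs to the feasible set
  have hmem0 : (0:ℝ) ∈ {a : ℝ | ∃ i : Fin m, ∃ f : Fin p → ℝ,
      V.mulVec f = 0 ∧ ∑ j, f j = 0 ∧ ∑ j, |f j| ≤ 1 ∧ a = H.mulVec f i} :=
    ⟨⟨0, hm⟩, 0, by simp, by simp, by simp, by simp⟩
  have hSne : Set.Nonempty {a : ℝ | ∃ i : Fin m, ∃ f : Fin p → ℝ,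
      V.mulVec f = 0 ∧ ∑ j, f j = 0 ∧ ∑ j, |f j| ≤ 1 ∧ a = H.mulVec f i} := ⟨0, hmem0⟩
  have hSbdd : BddAbove {a : ℝ | ∃ i : Fin m, ∃ f : Fin p → ℝ,
      V.mulVec f = 0 ∧ ∑ j, f j = 0 ∧ ∑ j, |f j| ≤ 1 ∧ a = H.mulVec f i} := ⟨D, hub⟩
  -- the sSup equals D
  have hsup : sSup {a : ℝ | ∃ i : Fin m, ∃ f : Fin p → ℝ,
      V.mulVec f = 0 ∧ ∑ j, f j = 0 ∧ ∑ j, |f j| ≤ 1 ∧ a = H.mulVec f i} = D := by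
    refine le_antisymm (csSup_le hSne hub) (ciSup_le fun i => ?_)
    by_cases hz : (Submodule.Quotient.mk (fun j => H i j) : (Fin p → ℝ) ⧸ W) = 0
    · have : d i = 0 := by rw [hd]; simp [hz]
      rw [this]
      exact le_csSup hSbdd hmem0
    · obtain ⟨ψ, hψ0, hψbd, hψh⟩ := optaffine_dual_vector W _ hz
      set f : Fin p → ℝ := fun j => ψ (Pi.single j 1) with hf
      have hpsix : ∀ x : Fin p → ℝ, ψ x = ∑ j, x j * f j := fun x => optaffine_psi_eq ψ x
      have hVf : V.mulVec f = 0 := by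
        funext l
        have hrow : (fun j => V l j) ∈ W := by
          refine ⟨(Pi.single l 1, 0), ?_⟩
          funext j
          simp [hT, OptAffineTmap_apply, Pi.single_apply, ite_mul, Finset.sum_ite_eq']
        have := hψ0 _ hrow
        rw [hpsix] at this
        simpa [Matrix.mulVec, dotProduct] using this
      have hsumf : ∑ j, f j = 0 := by
        have hone : (fun _ : Fin p => (1:ℝ)) ∈ W := by
          refine ⟨(0, 1), ?_⟩
          funext j
          simp [hT, OptAffineTmap_apply]
        have := hψ0 _ hone
        rw [hpsix] at this
        simpa using this
      have hl1 : ∑ j, |f j| ≤ 1 := by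
        set s : Fin p → ℝ := fun j => if f j < 0 then -1 else 1 with hs
        have hsnorm : ‖s‖ ≤ 1 := by
          refine (pi_norm_le_iff_of_nonneg zero_le_one).mpr fun j => ?_
          rw [hs]
          by_cases hj : f j < 0 <;> simp [hj]
        have hsval : ψ s = ∑ j, |f j| := by
          rw [hpsix]
          refine Finset.sum_congr rfl fun j _ => ?_
          rw [hs]
          by_cases hj : f j < 0
          · simp [hj, abs_of_neg hj]
          · simp [hj, abs_of_nonneg (not_lt.mp hj)]
        calc ∑ j, |f j| = ψ s := hsval.symm
          _ ≤ |ψ s| := le_abs_self _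
          _ ≤ ‖s‖ := hψbd s
          _ ≤ 1 := hsnorm
      have hval : H.mulVec f i = d i := by
        have : ψ (fun j => H i j) = ∑ j, H i j * f j := hpsix _
        rw [hψh] at this
        have hmv : H.mulVec f i = ∑ j, H i j * f j := by
          simp [Matrix.mulVec, dotProduct]
        rw [hmv, ← this, hd]
      exact le_csSup hSbdd ⟨i, f, hVf, hsumf, hl1, hval.symm⟩
  rw [hsup]
  -- now show the iInf equals D
  have Fnonneg : ∀ (K : Matrix (Fin m) (Fin n) ℝ) (K0 : Fin m → ℝ),
      0 ≤ ⨆ i, ⨆ j, |(H - (K * V + Matrix.of fun i (_ : Fin p) => K0 i)) i j| := by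
    intro K K0
    refine le_trans ?_ (le_ciSup (Finite.bddAbove_range _) (Classical.arbitrary (Fin m)))
    refine le_trans ?_ (le_ciSup (Finite.bddAbove_range _) (Classical.arbitrary (Fin p)))
    exact abs_nonneg _
  refine le_antisymm ?_ ?_
  · -- iInf ≤ D via ε-optimal K, K0
    refine le_of_forall_pos_le_add ?_
    intro ε hε
    have key : ∀ i : Fin m, ∃ kc : (Fin n → ℝ) × ℝ, ∀ j, |H i j - T kc j| ≤ D + ε := by
      intro i
      obtain ⟨mm, hmm, hnorm⟩ := Submodule.Quotient.norm_mk_lt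
        (Submodule.Quotient.mk (fun j => H i j) : (Fin p → ℝ) ⧸ W) hε
      have hw : (fun j => H i j) - mm ∈ W := (Submodule.Quotient.eq W).mp hmm.symm
      obtain ⟨kc, hkc⟩ := hw
      refine ⟨kc, fun j => ?_⟩
      have hj : H i j - T kc j = mm j := by
        have := congrFun hkc j
        simp only [Pi.sub_apply] at this
        linarith [this]
      rw [hj]
      calc |mm j| = ‖mm j‖ := (Real.norm_eq_abs _).symm
        _ ≤ ‖mm‖ := norm_le_pi_norm mm j
        _ ≤ d i + ε := le_of_lt hnorm
        _ ≤ D + ε := by linarith [hdD i]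
    choose kc hkc using key
    have hbb2 : BddBelow (Set.range fun K : Matrix (Fin m) (Fin n) ℝ =>
        ⨅ K0 : Fin m → ℝ, ⨆ i, ⨆ j,
          |(H - (K * V + Matrix.of fun i (_ : Fin p) => K0 i)) i j|) := by
      refine ⟨0, ?_⟩
      rintro x ⟨K, rfl⟩
      exact le_ciInf fun K0 => Fnonneg K K0
    have hbb1 : ∀ K : Matrix (Fin m) (Fin n) ℝ, BddBelow (Set.range fun K0 : Fin m → ℝ =>
        ⨆ i, ⨆ j, |(H - (K * V + Matrix.of fun i (_ : Fin p) => K0 i)) i j|) := by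
      intro K
      refine ⟨0, ?_⟩
      rintro x ⟨K0, rfl⟩
      exact Fnonneg K K0
    set Kstar : Matrix (Fin m) (Fin n) ℝ := Matrix.of fun i l => (kc i).1 l with hK
    set K0star : Fin m → ℝ := fun i => (kc i).2 with hK0
    refine le_trans (ciInf_le hbb2 Kstar) (le_trans (ciInf_le (hbb1 Kstar) K0star) ?_)
    refine ciSup_le fun i => ciSup_le fun j => ?_
    rw [entry]
    exact hkc i j
  · -- D ≤ iInf
    refine le_ciInf fun K => le_ciInf fun K0 => ciSup_le fun i => ?_
    have hrow : T (K i, K0 i) ∈ W := ⟨(K i, K0 i), rfl⟩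
    have h1 : d i ≤ ‖(fun j => H i j) - T (K i, K0 i)‖ := q_le _ _ hrow
    have h2 : (⨆ j, |(H - (K * V + Matrix.of fun i (_ : Fin p) => K0 i)) i j|)
        = ‖(fun j => H i j) - T (K i, K0 i)‖ := by
      rw [← optaffine_sup_abs_eq_norm]
      refine iSup_congr fun j => ?_
      rw [entry]
      rfl
    refine le_trans ?_ (le_ciSup (Finite.bddAbove_range _) i)
    rw [h2]
    exact h1
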